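/- arXiv:1612.09569 — 4 statements merged into one kernel-verified Lean document; each statement's English description precedes it below -/
import Mathlib

section
/- Let μ be a finite positive Borel measure on the circle S¹. Then the limit lim_{N→∞} (1/(2N+1)) ∑_{n=-N}^{N} |μ̂(n)|² exists and equals ∑_{t ∈ S¹ : μ({t}) ≠ 0} μ({t})², the sum of the squares of the masses of the atoms of μ. -/
open MeasureTheory Filter Finset


lemma fourier_sub' (n : ℤ) (x y : AddCircle (1:ℝ)) :
    fourier n (x - y) = fourier n x * (starRingEnd ℂ) (fourier n y) := by
  rw [fourier_apply, smul_sub, sub_eq_add_neg, AddCircle.toCircle_add, Circle.coe_mul,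
    fourier_neg', ← fourier_apply]

lemma fourier_norm_one (n : ℤ) (x : AddCircle (1:ℝ)) : ‖(fourier n x : ℂ)‖ = 1 := by
  rw [fourier_apply]; exact Circle.norm_coe _

lemma fourier_zpow (n : ℤ) (x : AddCircle (1:ℝ)) :
    fourier n x = (fourier 1 x : ℂ) ^ n := by
  have hz : (fourier 1 x : ℂ) ≠ 0 := by
    intro h; simpa [h] using fourier_norm_one 1 x
  induction n using Int.induction_on with
  | zero => simpa using (fourier_zero (x := x))
  | succ i ih =>
      have : ((i : ℤ) + 1) = (i : ℤ) + 1 := rfl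
      rw [fourier_add (m := (i : ℤ)) (n := 1), ih, zpow_add_one₀ hz]
  | pred i ih =>
      have h1 : fourier (-(i:ℤ) - 1) x = fourier (-(i:ℤ)) x * fourier (-1) x := by
        rw [← fourier_add]; ring_nf
      have h2 : fourier (-1 : ℤ) x = (fourier 1 x : ℂ)⁻¹ := by
        rw [fourier_neg, fourier_one, ← Circle.coe_inv_eq_conj, Circle.coe_inv]
      rw [h1, ih, h2, zpow_sub_one₀ hz]

lemma sum_zpow_Icc_eq (z : ℂ) (hz : z ≠ 0) (N : ℕ) :
    ∑ n ∈ Icc (-(N:ℤ)) (N:ℤ), z ^ n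
      = z ^ (-(N:ℤ)) * ∑ k ∈ range (2*N+1), z ^ k := by
  rw [Finset.mul_sum]
  refine Finset.sum_nbij' (fun n => (n + N).toNat) (fun k => (k:ℤ) - N) ?_ ?_ ?_ ?_ ?_
  · intro a ha
    simp only [Finset.mem_Icc] at ha
    simp only [Finset.mem_range]
    omega
  · intro a ha
    simp only [Finset.mem_range] at ha
    simp only [Finset.mem_Icc]
    omega
  · intro a ha
    simp only [Finset.mem_Icc] at ha
    omega
  · intro a ha
    simp only [Finset.mem_range] at ha
    omega
  · intro a ha
    simp only [Finset.mem_Icc] at ha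
    rw [← zpow_natCast z, Int.toNat_of_nonneg (by omega), ← zpow_add₀ hz]
    ring_nf

lemma norm_sum_zpow_le (z : ℂ) (hn : ‖z‖ = 1) (h1 : z ≠ 1) (N : ℕ) :
    ‖∑ n ∈ Icc (-(N:ℤ)) (N:ℤ), z ^ n‖ ≤ 2 / ‖z - 1‖ := by
  have hz : z ≠ 0 := by intro h; rw [h] at hn; simp at hn
  rw [sum_zpow_Icc_eq z hz N, geom_sum_eq h1, norm_mul, norm_zpow, hn, one_zpow, one_mul,
    norm_div]
  have h2 : ‖z ^ (2*N+1) - 1‖ ≤ 2 := by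
    calc ‖z ^ (2*N+1) - 1‖ ≤ ‖z ^ (2*N+1)‖ + ‖(1:ℂ)‖ := norm_sub_le _ _
    _ ≤ 2 := by rw [norm_pow, hn]; norm_num
  have h3 : ‖z - 1‖ > 0 := by
    simpa using sub_ne_zero.mpr h1
  rw [div_le_div_iff₀ h3 h3]
  nlinarith

lemma tendsto_avg (x : AddCircle (1:ℝ)) :
    Tendsto (fun N : ℕ => (1/(2*(N:ℝ)+1) : ℂ) * ∑ n ∈ Icc (-(N:ℤ)) (N:ℤ), fourier n x)
      atTop (nhds (if x = 0 then (1:ℂ) else 0)) := by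
  by_cases hx : x = 0
  · simp only [hx, if_pos rfl]
    have heq : ∀ N : ℕ, (1/(2*(N:ℝ)+1) : ℂ) * ∑ n ∈ Icc (-(N:ℤ)) (N:ℤ), fourier n (0 : AddCircle (1:ℝ)) = 1 := by
      intro N
      have hcard : (Icc (-(N:ℤ)) (N:ℤ)).card = 2*N+1 := by
        rw [Int.card_Icc]; omega
      have hne : (2*((N:ℝ):ℂ)+1) ≠ 0 := by
        exact_mod_cast (by positivity : (2*(N:ℝ)+1) ≠ 0)
      simp only [fourier_eval_zero, Finset.sum_const, hcard, nsmul_eq_mul, mul_one]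
      rw [show ((2*N+1:ℕ):ℂ) = 2*((N:ℝ):ℂ)+1 by push_cast; ring]
      rw [one_div, inv_mul_cancel₀ hne]
    simp only [heq]
    exact tendsto_const_nhds
  · simp only [if_neg hx]
    set z : ℂ := fourier 1 x with hzdef
    have hn : ‖z‖ = 1 := fourier_norm_one 1 x
    have h1 : z ≠ 1 := by
      intro h
      apply hx
      have hc : (AddCircle.toCircle x : ℂ) = 1 := by rw [← fourier_one]; exact h
      have h2 : AddCircle.toCircle x = 1 := Circle.coe_eq_one.mp hc
      exact AddCircle.injective_toCircle one_ne_zero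
        (h2.trans AddCircle.toCircle_zero.symm)
    set C : ℝ := 2 / ‖z - 1‖ with hC
    have hCpos : 0 ≤ C := by positivity
    refine squeeze_zero_norm (a := fun N : ℕ => C / (2*(N:ℝ)+1)) ?_ ?_
    · intro N
      have hNpos : (0:ℝ) < 2*(N:ℝ)+1 := by positivity
      have hb : ‖∑ n ∈ Icc (-(N:ℤ)) (N:ℤ), (fourier n x : ℂ)‖ ≤ C := by
        have heq2 : ∀ n ∈ Icc (-(N:ℤ)) (N:ℤ), (fourier n x : ℂ) = z ^ n :=
          fun n _ => fourier_zpow n x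
        rw [Finset.sum_congr rfl heq2]
        exact norm_sum_zpow_le z hn h1 N
      rw [norm_mul]
      have hnorm1 : ‖(1/(2*((N:ℝ):ℂ)+1) : ℂ)‖ = 1/(2*(N:ℝ)+1) := by
        rw [show (2*((N:ℝ):ℂ)+1) = ((2*(N:ℝ)+1 : ℝ) : ℂ) by push_cast; ring]
        rw [norm_div, norm_one, Complex.norm_real, Real.norm_eq_abs, abs_of_pos hNpos]
      rw [hnorm1]
      calc (1/(2*(N:ℝ)+1)) * ‖∑ n ∈ Icc (-(N:ℤ)) (N:ℤ), (fourier n x : ℂ)‖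
          ≤ (1/(2*(N:ℝ)+1)) * C := by gcongr
        _ = C / (2*(N:ℝ)+1) := by ring
    · apply Tendsto.div_atTop tendsto_const_nhds
      apply tendsto_atTop_add_const_right
      exact (tendsto_natCast_atTop_atTop (R := ℝ)).const_mul_atTop two_pos

lemma diag_measure (μ : Measure (AddCircle (1:ℝ))) [IsFiniteMeasure μ] :
    ((μ.prod μ) {p : AddCircle (1:ℝ) × AddCircle (1:ℝ) | p.1 = p.2}).toReal
      = ∑' t : {t : AddCircle (1:ℝ) // μ {t} ≠ 0}, (μ {t.val}).toReal ^ 2 := by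
  have hdm : MeasurableSet {p : AddCircle (1:ℝ) × AddCircle (1:ℝ) | p.1 = p.2} :=
    (isClosed_eq continuous_fst continuous_snd).measurableSet
  set S : Set (AddCircle (1:ℝ)) := {t | μ {t} ≠ 0} with hS
  have hScount : S.Countable := by
    have h := Measure.countable_meas_level_set_pos (μ := μ) (g := id) measurable_id
    convert h using 1
    ext t
    simp [hS, Set.setOf_eq_eq_singleton, pos_iff_ne_zero]
  have hprod : (μ.prod μ) {p : AddCircle (1:ℝ) × AddCircle (1:ℝ) | p.1 = p.2}
      = ∫⁻ x, μ {x} ∂μ := by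
    rw [Measure.prod_apply hdm]
    congr 1
    funext x
    congr 1
    ext y
    simp [eq_comm]
  have hind : (fun x => μ {x}) = S.indicator (fun x => μ {x}) := by
    funext x
    by_cases hx : x ∈ S
    · rw [Set.indicator_of_mem hx]
    · rw [Set.indicator_of_notMem hx]
      simpa [hS] using hx
  have hres : ∫⁻ x, μ {x} ∂μ = ∫⁻ x in S, μ {x} ∂μ := by
    rw [← lintegral_indicator hScount.measurableSet]
    exact lintegral_congr fun x => congrFun hind x
  rw [hprod, hres,
    lintegral_countable _ hScount,
    ENNReal.tsum_toReal_eq (fun a => ENNReal.mul_ne_top (measure_ne_top μ _) (measure_ne_top μ _))]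
  apply tsum_congr
  intro a
  rw [ENNReal.toReal_mul, sq]

/-- **Wiener's theorem.** For a finite positive Borel measure `μ` on the circle `S¹ = ℝ/ℤ`,
the symmetric Cesàro averages of `|μ̂(n)|²` converge to the sum of the squares of the masses
of the atoms of `μ`. -/
theorem wiener_atoms (μ : Measure (AddCircle (1 : ℝ))) [IsFiniteMeasure μ] :
    Tendsto
      (fun N : ℕ => (1 / (2 * (N : ℝ) + 1)) *
        ∑ n ∈ Finset.Icc (-(N : ℤ)) (N : ℤ), ‖∫ t, fourier n t ∂μ‖ ^ 2)
      atTop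
      (nhds (∑' t : {t : AddCircle (1 : ℝ) // μ {t} ≠ 0}, (μ {t.val}).toReal ^ 2)) := by
  have hdm : MeasurableSet {p : AddCircle (1:ℝ) × AddCircle (1:ℝ) | p.1 = p.2} :=
    (isClosed_eq continuous_fst continuous_snd).measurableSet
  have hint : ∀ n : ℤ, Integrable
      (fun p : AddCircle (1:ℝ) × AddCircle (1:ℝ) => (fourier n (p.1 - p.2) : ℂ)) (μ.prod μ) := by
    intro n
    have hcont : Continuous fun p : AddCircle (1:ℝ) × AddCircle (1:ℝ) =>
        (fourier n (p.1 - p.2) : ℂ) :=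
      (fourier n).continuous.comp (continuous_fst.sub continuous_snd)
    refine (integrable_const (1:ℝ)).mono' hcont.aestronglyMeasurable ?_
    exact Eventually.of_forall fun p => by rw [fourier_norm_one]
  have hA : ∀ n : ℤ, ∫ p : AddCircle (1:ℝ) × AddCircle (1:ℝ),
      (fourier n (p.1 - p.2) : ℂ) ∂(μ.prod μ) = ((‖∫ t, fourier n t ∂μ‖ ^ 2 : ℝ) : ℂ) := by
    intro n
    calc ∫ p : AddCircle (1:ℝ) × AddCircle (1:ℝ), (fourier n (p.1 - p.2) : ℂ) ∂(μ.prod μ)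
        = ∫ p : AddCircle (1:ℝ) × AddCircle (1:ℝ),
            (fourier n p.1 : ℂ) * (starRingEnd ℂ) (fourier n p.2) ∂(μ.prod μ) := by
          simp_rw [fourier_sub']
      _ = (∫ t, (fourier n t : ℂ) ∂μ) * (∫ t, (starRingEnd ℂ) (fourier n t) ∂μ) :=
          integral_prod_mul (fun t => (fourier n t : ℂ)) (fun t => (starRingEnd ℂ) (fourier n t))
      _ = (∫ t, (fourier n t : ℂ) ∂μ) * (starRingEnd ℂ) (∫ t, (fourier n t : ℂ) ∂μ) := by
          rw [integral_conj]
      _ = ((‖∫ t, fourier n t ∂μ‖ ^ 2 : ℝ) : ℂ) := by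
          rw [Complex.mul_conj]
          congr 1
          rw [Complex.normSq_eq_norm_sq]
  have key : ∀ N : ℕ, (((1 / (2 * (N : ℝ) + 1)) *
        ∑ n ∈ Finset.Icc (-(N:ℤ)) (N:ℤ), ‖∫ t, fourier n t ∂μ‖ ^ 2 : ℝ) : ℂ)
      = ∫ p : AddCircle (1:ℝ) × AddCircle (1:ℝ),
          ((1/(2*(N:ℝ)+1) : ℂ) * ∑ n ∈ Icc (-(N:ℤ)) (N:ℤ), fourier n (p.1 - p.2)) ∂(μ.prod μ) := by
    intro N
    rw [MeasureTheory.integral_const_mul, integral_finset_sum _ (fun n _ => hint n)]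
    push_cast
    congr 1
    refine Finset.sum_congr rfl fun n _ => ?_
    rw [← Complex.ofReal_pow]
    exact (hA n).symm
  set F : AddCircle (1:ℝ) × AddCircle (1:ℝ) → ℂ :=
    fun p => Set.indicator {p : AddCircle (1:ℝ) × AddCircle (1:ℝ) | p.1 = p.2} (fun _ => (1:ℂ)) p
    with hFdef
  have hlim : Tendsto (fun N : ℕ => ∫ p : AddCircle (1:ℝ) × AddCircle (1:ℝ),
      ((1/(2*(N:ℝ)+1) : ℂ) * ∑ n ∈ Icc (-(N:ℤ)) (N:ℤ), fourier n (p.1 - p.2)) ∂(μ.prod μ))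
      atTop (nhds (∫ p, F p ∂(μ.prod μ))) := by
    refine tendsto_integral_of_dominated_convergence (fun _ => (1:ℝ)) ?_ (integrable_const 1) ?_ ?_
    · intro N
      refine Continuous.aestronglyMeasurable ?_
      exact continuous_const.mul (continuous_finset_sum _ fun n _ =>
        (fourier n).continuous.comp (continuous_fst.sub continuous_snd))
    · intro N
      refine Eventually.of_forall fun p => ?_
      have hNpos : (0:ℝ) < 2*(N:ℝ)+1 := by positivity
      rw [norm_mul]
      have hcard : (Icc (-(N:ℤ)) (N:ℤ)).card = 2*N+1 := by rw [Int.card_Icc]; omega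
      have h1 : ‖∑ n ∈ Icc (-(N:ℤ)) (N:ℤ), (fourier n (p.1 - p.2) : ℂ)‖ ≤ 2*(N:ℝ)+1 := by
        calc ‖∑ n ∈ Icc (-(N:ℤ)) (N:ℤ), (fourier n (p.1 - p.2) : ℂ)‖
            ≤ ∑ n ∈ Icc (-(N:ℤ)) (N:ℤ), ‖(fourier n (p.1 - p.2) : ℂ)‖ := norm_sum_le _ _
          _ = 2*(N:ℝ)+1 := by
              simp only [fourier_norm_one, Finset.sum_const, hcard, nsmul_eq_mul, mul_one]
              push_cast; ring
      have hnorm1 : ‖(1/(2*((N:ℝ):ℂ)+1) : ℂ)‖ = 1/(2*(N:ℝ)+1) := by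
        rw [show (2*((N:ℝ):ℂ)+1) = ((2*(N:ℝ)+1 : ℝ) : ℂ) by push_cast; ring]
        rw [norm_div, norm_one, Complex.norm_real, Real.norm_eq_abs, abs_of_pos hNpos]
      rw [hnorm1]
      calc (1/(2*(N:ℝ)+1)) * ‖∑ n ∈ Icc (-(N:ℤ)) (N:ℤ), (fourier n (p.1 - p.2) : ℂ)‖
          ≤ (1/(2*(N:ℝ)+1)) * (2*(N:ℝ)+1) := by gcongr
        _ = 1 := by field_simp
    · refine Eventually.of_forall fun p => ?_
      have h := tendsto_avg (p.1 - p.2)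
      have hFp : F p = if p.1 - p.2 = 0 then (1:ℂ) else 0 := by
        rw [hFdef]
        simp only [Set.indicator_apply, Set.mem_setOf_eq, sub_eq_zero]
      rw [hFp]
      exact h
  have hF : ∫ p, F p ∂(μ.prod μ)
      = ((((μ.prod μ) {p : AddCircle (1:ℝ) × AddCircle (1:ℝ) | p.1 = p.2}).toReal : ℝ) : ℂ) := by
    rw [hFdef, integral_indicator_const (1:ℂ) hdm, Complex.real_smul, mul_one]; rfl
  rw [hF] at hlim
  have hlim2 : Tendsto (fun N : ℕ => (((1 / (2 * (N : ℝ) + 1)) *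
        ∑ n ∈ Finset.Icc (-(N:ℤ)) (N:ℤ), ‖∫ t, fourier n t ∂μ‖ ^ 2 : ℝ) : ℂ)) atTop
      (nhds ((((μ.prod μ) {p : AddCircle (1:ℝ) × AddCircle (1:ℝ) | p.1 = p.2}).toReal : ℝ) : ℂ)) := by
    simp_rw [key]; exact hlim
  have hre := (Complex.continuous_re.tendsto _).comp hlim2
  simp only [Function.comp_def, Complex.ofReal_re] at hre
  rw [diag_measure μ] at hre
  exact hre
end

section
/- Let μ be a finite positive Borel measure on the circle S¹. Suppose there exists a sequence of continuous functions u_p : S¹ → ℂ with |u_p(s)| = 1 for all s ∈ S¹ and all p, such that for every j ∈ ℤ, ∫_{S¹} e^{2πijs} u_p(s) dμ(s) → 0 as p → ∞. Then μ is non-atomic, i.e., μ({t}) = 0 for every t ∈ S¹. -/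
open MeasureTheory Filter

/-- If there is a sequence of unimodular continuous functions `u_p` on the circle such that
`∫ e^{2πijs} u_p(s) dμ(s) → 0` for every `j ∈ ℤ`, then the finite measure `μ` is non-atomic. -/
theorem nonatomic_of_unimodular_sequence
    (μ : Measure (AddCircle (1 : ℝ))) [IsFiniteMeasure μ]
    (u : ℕ → C(AddCircle (1 : ℝ), ℂ))
    (hu : ∀ (p : ℕ) (s : AddCircle (1 : ℝ)), ‖u p s‖ = 1)
    (h : ∀ j : ℤ, Tendsto (fun p : ℕ => ∫ s, fourier j s * u p s ∂μ) atTop (nhds 0)) :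
    ∀ t : AddCircle (1 : ℝ), μ {t} = 0 := by
  open Set Metric in
  haveI : Fact ((0:ℝ) < 1) := ⟨one_pos⟩
  have hint : ∀ (p : ℕ) (f : C(AddCircle (1:ℝ), ℂ)), Integrable (fun s => f s * u p s) μ :=
    fun p f => (f.continuous.mul (u p).continuous).integrable_of_hasCompactSupport
      (HasCompactSupport.of_compactSpace _)
  -- Step 1: the integrals tend to zero for every continuous function, by density of the
  -- span of the characters.
  have key : ∀ f : C(AddCircle (1:ℝ), ℂ),
      Tendsto (fun p => ∫ s, f s * u p s ∂μ) atTop (nhds 0) := by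
    set S : Submodule ℂ C(AddCircle (1:ℝ), ℂ) :=
      { carrier := {f | Tendsto (fun p => ∫ s, f s * u p s ∂μ) atTop (nhds 0)}
        add_mem' := by
          intro f g hf hg
          simp only [Set.mem_setOf_eq] at hf hg ⊢
          have h2 : (fun p => ∫ s, (f + g) s * u p s ∂μ)
              = fun p => (∫ s, f s * u p s ∂μ) + ∫ s, g s * u p s ∂μ := by
            funext p
            rw [← integral_add (hint p f) (hint p g)]
            congr 1; funext s
            simp [add_mul]
          rw [h2]
          simpa using hf.add hg
        zero_mem' := by
          simp only [Set.mem_setOf_eq, ContinuousMap.zero_apply, zero_mul, integral_zero]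
          exact tendsto_const_nhds
        smul_mem' := by
          intro c f hf
          simp only [Set.mem_setOf_eq] at hf ⊢
          have h2 : (fun p => ∫ s, (c • f) s * u p s ∂μ)
              = fun p => c • ∫ s, f s * u p s ∂μ := by
            funext p
            rw [← integral_smul]
            congr 1; funext s
            simp [smul_eq_mul, mul_assoc]
          rw [h2]
          simpa using hf.const_smul c } with hS
    have hclosed : IsClosed (S : Set C(AddCircle (1:ℝ), ℂ)) := by
      rw [← isSeqClosed_iff_isClosed]
      intro g f hg hgf
      show Tendsto (fun p => ∫ s, f s * u p s ∂μ) atTop (nhds 0)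
      rw [NormedAddCommGroup.tendsto_nhds_zero]
      intro ε hε
      set M := (μ Set.univ).toReal + 1 with hM
      have hM0 : 0 < M := by positivity
      have hδ : 0 < ε / (2 * M) := by positivity
      obtain ⟨N, hN⟩ := Metric.tendsto_atTop.mp hgf _ hδ
      have hn := hN N le_rfl
      set n := N
      have hbound : ∀ p, ‖(∫ s, f s * u p s ∂μ) - ∫ s, g n s * u p s ∂μ‖ ≤ ε / 2 := by
        intro p
        rw [← integral_sub (hint p f) (hint p (g n))]
        have hb : ‖∫ s, (f s * u p s - g n s * u p s) ∂μ‖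
            ≤ (ε / (2*M)) * (μ Set.univ).toReal := by
          apply norm_integral_le_of_norm_le_const
          filter_upwards with s
          rw [← sub_mul, norm_mul, hu p s, mul_one]
          calc ‖f s - g n s‖ = ‖(f - g n) s‖ := by simp
            _ ≤ ‖f - g n‖ := ContinuousMap.norm_coe_le_norm _ _
            _ ≤ ε / (2*M) := by rw [← dist_eq_norm, dist_comm]; exact hn.le
        refine hb.trans ?_
        rw [div_mul_eq_mul_div, div_le_div_iff₀ (by positivity) (by norm_num)]
        nlinarith [ENNReal.toReal_nonneg (a := μ Set.univ)]
      have hgn : Tendsto (fun p => ∫ s, g n s * u p s ∂μ) atTop (nhds 0) := hg n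
      have hev := (NormedAddCommGroup.tendsto_nhds_zero.mp hgn) (ε/2) (by positivity)
      filter_upwards [hev] with p hp
      calc ‖∫ s, f s * u p s ∂μ‖
          ≤ ‖(∫ s, f s * u p s ∂μ) - ∫ s, g n s * u p s ∂μ‖ + ‖∫ s, g n s * u p s ∂μ‖ := by
            have := norm_add_le ((∫ s, f s * u p s ∂μ) - ∫ s, g n s * u p s ∂μ)
              (∫ s, g n s * u p s ∂μ)
            simpa using this
        _ < ε/2 + ε/2 := add_lt_add_of_le_of_lt (hbound p) hp
        _ = ε := by ring
    have hle : (Submodule.span ℂ (Set.range (@fourier 1))).topologicalClosure ≤ S :=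
      Submodule.topologicalClosure_minimal _
        (Submodule.span_le.mpr (by rintro _ ⟨j, rfl⟩; exact h j)) hclosed
    rw [span_fourier_closure_eq_top] at hle
    intro f
    exact hle (Submodule.mem_top (x := f))
  -- Step 2: if there were an atom, a bump function around it would contradict Step 1.
  intro t
  by_contra hμt
  obtain ⟨r, hr, hrμ⟩ : ∃ r : ℝ, 0 < r ∧ μ (closedBall t r \ {t}) < μ {t} / 2 := by
    have hmono : Antitone (fun n : ℕ => closedBall t (1/(n+1)) \ {t}) := by
      intro m n hmn
      apply diff_subset_diff_left
      apply closedBall_subset_closedBall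
      apply one_div_le_one_div_of_le
      · positivity
      · have : (m:ℝ) ≤ n := by exact_mod_cast hmn
        linarith
    have htend := tendsto_measure_iInter_atTop (μ := μ)
      (s := fun n : ℕ => closedBall t (1/(n+1)) \ {t})
      (fun n => ((measurableSet_closedBall.diff
        (measurableSet_singleton t)).nullMeasurableSet))
      hmono ⟨0, measure_ne_top μ _⟩
    have hempty : (⋂ n : ℕ, closedBall t (1/(n+1)) \ {t}) = ∅ := by
      rw [eq_empty_iff_forall_notMem]
      intro x hx
      simp only [mem_iInter, mem_diff, mem_closedBall, mem_singleton_iff] at hx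
      have hxt : x ≠ t := (hx 0).2
      have hc : 0 < dist x t := dist_pos.mpr hxt
      obtain ⟨n, hn⟩ := exists_nat_one_div_lt hc
      exact absurd (hx n).1 (by linarith)
    rw [hempty] at htend
    simp only [measure_empty] at htend
    have hpos : (0:ENNReal) < μ {t} / 2 := ENNReal.div_pos hμt (by norm_num)
    obtain ⟨n, hn⟩ := (htend.eventually_lt_const hpos).exists
    exact ⟨1/(n+1), by positivity, hn⟩
  obtain ⟨f, hf0, hf1, hf01⟩ := exists_continuous_zero_one_of_isCompact
    (X := AddCircle (1:ℝ)) (s := (ball t r)ᶜ) (t := {t})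
    (isOpen_ball.isClosed_compl.isCompact) isClosed_singleton
    (by
      rw [Set.disjoint_compl_left_iff_subset, Set.singleton_subset_iff]
      exact mem_ball_self hr)
  set g : C(AddCircle (1:ℝ), ℂ) :=
    ⟨fun s => (f s : ℂ), Complex.continuous_ofReal.comp f.continuous⟩ with hg
  set c := (μ {t}).toReal with hc
  have hc0 : 0 < c := ENNReal.toReal_pos hμt (measure_ne_top μ _)
  have hlow : ∀ p, c / 2 ≤ ‖∫ s, g s * u p s ∂μ‖ := by
    intro p
    have hsplit : (∫ s, g s * u p s ∂μ)
        = (∫ s in {t}, g s * u p s ∂μ) + ∫ s in ({t} : Set _)ᶜ, g s * u p s ∂μ := by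
      rw [integral_add_compl (measurableSet_singleton t) (hint p g)]
    have hsing : (∫ s in {t}, g s * u p s ∂μ) = c • (g t * u p t) := integral_singleton _ t
    have hgt : g t = 1 := by
      simp only [hg, ContinuousMap.coe_mk]
      rw [hf1 rfl]
      norm_num
    have hnorm_sing : ‖∫ s in {t}, g s * u p s ∂μ‖ = c := by
      rw [hsing, hgt, one_mul, norm_smul, hu p t]
      simp [abs_of_pos hc0]
    have hcompl_eq : (∫ s in ({t} : Set _)ᶜ, g s * u p s ∂μ)
        = ∫ s in closedBall t r \ {t}, g s * u p s ∂μ := by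
      refine setIntegral_eq_of_subset_of_forall_diff_eq_zero (μ := μ)
        (f := fun s => g s * u p s) (s := closedBall t r \ {t}) (t := ({t} : Set _)ᶜ)
        (measurableSet_singleton t).compl (fun x hx => hx.2) ?_
      intro x hx
      have hxb : x ∉ ball t r := by
        intro hxb
        exact hx.2 ⟨ball_subset_closedBall hxb, hx.1⟩
      have : f x = 0 := hf0 hxb
      simp [hg, this]
    have hcompl_le : ‖∫ s in ({t} : Set _)ᶜ, g s * u p s ∂μ‖
        ≤ (μ (closedBall t r \ {t})).toReal := by
      rw [hcompl_eq]
      have := norm_setIntegral_le_of_norm_le_const (μ := μ)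
        (f := fun s => g s * u p s) (s := closedBall t r \ {t}) (C := 1)
        (lt_of_le_of_lt (measure_mono diff_subset) (measure_lt_top μ _))
        (fun x _ => by
          rw [norm_mul, hu p x, mul_one]
          simp only [hg, ContinuousMap.coe_mk, Complex.norm_real, Real.norm_eq_abs]
          rw [abs_of_nonneg (hf01 x).1]
          exact (hf01 x).2)
      rw [one_mul] at this
      exact this
    have hhalf : (μ (closedBall t r \ {t})).toReal ≤ c / 2 := by
      have hfin : μ {t} / 2 ≠ ⊤ := (ENNReal.div_lt_top (measure_ne_top μ _) (by norm_num)).ne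
      have h2 := ENNReal.toReal_mono hfin hrμ.le
      rw [ENNReal.toReal_div] at h2
      simpa [hc] using h2
    calc c / 2 = c - c / 2 := by ring
      _ ≤ ‖∫ s in {t}, g s * u p s ∂μ‖ - ‖∫ s in ({t} : Set _)ᶜ, g s * u p s ∂μ‖ := by
          rw [hnorm_sing]
          have := hcompl_le.trans hhalf
          linarith
      _ ≤ ‖∫ s, g s * u p s ∂μ‖ := by
          rw [hsplit]
          have h3 := norm_sub_norm_le (∫ s in ({t} : Set _), g s * u p s ∂μ)
            (-(∫ s in ({t} : Set _)ᶜ, g s * u p s ∂μ))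
          rw [norm_neg, sub_neg_eq_add] at h3
          linarith
  have := (NormedAddCommGroup.tendsto_nhds_zero.mp (key g)) (c/2) (by positivity)
  obtain ⟨p, hp⟩ := this.exists
  exact absurd (hlow p) (not_le.mpr hp)
end

section
/- Let μ and ν be finite positive Borel measures on the circle S¹ with μ absolutely continuous with respect to ν. If ν is mixing (i.e., ν̂(n) → 0 as |n| → ∞), then μ is mixing. -/
open MeasureTheory Filter
open scoped NNReal ENNReal

lemma integrable_fourier_mul (ν : Measure (AddCircle (1 : ℝ))) [IsFiniteMeasure ν]
    (n : ℤ) (Q : C(AddCircle (1 : ℝ), ℂ)) :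
    Integrable (fun t => fourier n t * Q t) ν :=
  ((fourier n).continuous.mul Q.continuous).integrable_of_hasCompactSupport
    (HasCompactSupport.of_compactSpace _)

lemma fourier_mul_span_tendsto (ν : Measure (AddCircle (1 : ℝ))) [IsFiniteMeasure ν]
    (hν : Tendsto (fun n : ℤ => ∫ t, fourier n t ∂ν) cofinite (nhds 0))
    (P : C(AddCircle (1 : ℝ), ℂ))
    (hP : P ∈ Submodule.span ℂ (Set.range (fourier (T := 1)))) :
    Tendsto (fun n : ℤ => ∫ t, fourier n t * P t ∂ν) cofinite (nhds 0) := by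
  induction hP using Submodule.span_induction with
  | mem Q hQ =>
      obtain ⟨m, rfl⟩ := hQ
      have h1 : (fun n : ℤ => ∫ t, fourier n t * fourier m t ∂ν)
          = (fun k : ℤ => ∫ t, fourier k t ∂ν) ∘ (fun n => n + m) := by
        funext n
        simp only [Function.comp]
        congr 1
        funext t
        rw [fourier_add]
      rw [h1]
      exact hν.comp ((add_left_injective m).tendsto_cofinite)
  | zero => simpa using (tendsto_const_nhds : Tendsto (fun _ : ℤ => (0:ℂ)) cofinite (nhds 0))
  | add Q R hQm hRm hQ hR =>
      have h1 : (fun n : ℤ => ∫ t, fourier n t * (Q + R) t ∂ν)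
          = fun n : ℤ => (∫ t, fourier n t * Q t ∂ν) + ∫ t, fourier n t * R t ∂ν := by
        funext n
        rw [← integral_add (integrable_fourier_mul ν n Q) (integrable_fourier_mul ν n R)]
        simp [mul_add]
      rw [h1]
      simpa using hQ.add hR
  | smul c Q hQm hQ =>
      have h1 : (fun n : ℤ => ∫ t, fourier n t * (c • Q) t ∂ν)
          = fun n : ℤ => c • ∫ t, fourier n t * Q t ∂ν := by
        funext n
        rw [← integral_smul]
        refine integral_congr_ae (Filter.Eventually.of_forall fun t => ?_)
        simp [smul_eq_mul]
        ring
      rw [h1]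
      simpa using hQ.const_smul c

/-- If `μ ≪ ν` are finite positive Borel measures on the circle and `ν` is mixing
(Rajchman), i.e. `ν̂(n) → 0` as `|n| → ∞`, then `μ` is mixing. -/
theorem mixing_of_absolutelyContinuous
    (μ ν : Measure (AddCircle (1 : ℝ))) [IsFiniteMeasure μ] [IsFiniteMeasure ν]
    (hac : μ.AbsolutelyContinuous ν)
    (hν : Tendsto (fun n : ℤ => ∫ t, fourier n t ∂ν) cofinite (nhds 0)) :
    Tendsto (fun n : ℤ => ∫ t, fourier n t ∂μ) cofinite (nhds 0) := by
  have hnorm : ∀ (m : ℤ) (x : AddCircle (1:ℝ)), ‖fourier m x‖ = 1 := fun m x =>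
    Circle.norm_coe _
  set f : AddCircle (1 : ℝ) → ℝ≥0 := fun x => (μ.rnDeriv ν x).toNNReal with hf
  have hfm : Measurable f := (Measure.measurable_rnDeriv μ ν).ennreal_toNNReal
  have hμ : μ = ν.withDensity (fun x => (f x : ℝ≥0∞)) := by
    haveI : μ.HaveLebesgueDecomposition ν := Measure.haveLebesgueDecomposition_of_finiteMeasure
    rw [← Measure.withDensity_rnDeriv_eq μ ν hac]
    refine withDensity_congr_ae ?_
    filter_upwards [Measure.rnDeriv_lt_top μ ν] with x hx
    simp [hf, ENNReal.coe_toNNReal hx.ne]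
  set F : AddCircle (1 : ℝ) → ℂ := fun t => ((f t : ℝ) : ℂ) with hF
  have hFint : Integrable F ν := by
    have h0 : Integrable (fun x => (μ.rnDeriv ν x).toReal) ν :=
      Measure.integrable_toReal_rnDeriv
    have h0' : Integrable (fun x => (((μ.rnDeriv ν x).toReal : ℝ) : ℂ)) ν := h0.ofReal
    refine h0'.congr (Filter.Eventually.of_forall fun x => ?_)
    simp [hF, hf, ENNReal.coe_toNNReal_eq_toReal]
  have key : ∀ n : ℤ, ∫ t, fourier n t ∂μ = ∫ t, fourier n t * F t ∂ν := by
    intro n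
    rw [hμ, integral_withDensity_eq_integral_smul hfm]
    congr 1
    funext t
    rw [NNReal.smul_def, Complex.real_smul, mul_comm]
  simp_rw [key]
  rw [Metric.tendsto_nhds]
  intro ε hε
  obtain ⟨g, hg, hgi⟩ := hFint.exists_boundedContinuous_integral_sub_le
    (by positivity : (0:ℝ) < ε/4)
  set C : ℝ := (ν Set.univ).toReal with hC
  have hC0 : 0 ≤ C := ENNReal.toReal_nonneg
  set δ : ℝ := ε / (4 * (C + 1)) with hδ
  have hδ0 : 0 < δ := by positivity
  have hgcl : (g.toContinuousMap) ∈ closure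
      ((Submodule.span ℂ (Set.range (fourier (T := 1)))) : Set C(AddCircle (1:ℝ), ℂ)) := by
    rw [← Submodule.topologicalClosure_coe, span_fourier_closure_eq_top]
    trivial
  obtain ⟨P, hPmem, hPdist⟩ := Metric.mem_closure_iff.mp hgcl δ hδ0
  have hPint : Integrable (fun t => P t) ν :=
    P.continuous.integrable_of_hasCompactSupport (HasCompactSupport.of_compactSpace _)
  have hPev : ∀ᶠ n : ℤ in cofinite, ‖∫ t, fourier n t * P t ∂ν‖ < ε/4 := by
    have := Metric.tendsto_nhds.mp (fourier_mul_span_tendsto ν hν P hPmem) (ε/4) (by positivity)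
    simpa [dist_eq_norm] using this
  filter_upwards [hPev] with n hn
  rw [dist_eq_norm, sub_zero]
  have hFPint : Integrable (fun t => F t - P t) ν := hFint.sub hPint
  have hmulint : Integrable (fun t => fourier n t * (F t - P t)) ν :=
    hFPint.bdd_mul (fourier n).continuous.aestronglyMeasurable
      (c := 1) (Filter.Eventually.of_forall fun x => le_of_eq (hnorm n x))
  have hsplit : ∫ t, fourier n t * F t ∂ν
      = (∫ t, fourier n t * (F t - P t) ∂ν) + ∫ t, fourier n t * P t ∂ν := by
    rw [← integral_add hmulint (integrable_fourier_mul ν n P)]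
    congr 1
    funext t
    ring
  have h1 : ‖∫ t, fourier n t * (F t - P t) ∂ν‖ ≤ ∫ t, ‖F t - P t‖ ∂ν := by
    refine (norm_integral_le_integral_norm _).trans (le_of_eq ?_)
    refine integral_congr_ae (Filter.Eventually.of_forall fun t => ?_)
    show ‖fourier n t * (F t - P t)‖ = ‖F t - P t‖
    rw [norm_mul, hnorm, one_mul]
  have i1 : Integrable (fun t => ‖F t - g t‖) ν := (hFint.sub hgi).norm
  have i2 : Integrable (fun t => ‖g t - P t‖) ν := (hgi.sub hPint).norm
  have h2 : ∫ t, ‖F t - P t‖ ∂ν ≤ (∫ t, ‖F t - g t‖ ∂ν) + ∫ t, ‖g t - P t‖ ∂ν := by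
    rw [← integral_add i1 i2]
    refine integral_mono hFPint.norm (i1.add i2) (fun t => ?_)
    calc ‖F t - P t‖ = dist (F t) (P t) := (dist_eq_norm _ _).symm
      _ ≤ dist (F t) (g t) + dist (g t) (P t) := dist_triangle _ _ _
      _ = ‖F t - g t‖ + ‖g t - P t‖ := by rw [dist_eq_norm, dist_eq_norm]
  have h3 : ∫ t, ‖g t - P t‖ ∂ν ≤ δ * C := by
    have : ∫ t, ‖g t - P t‖ ∂ν ≤ ∫ _t, δ ∂ν := by
      refine integral_mono i2 (integrable_const δ) (fun t => ?_)
      calc ‖g t - P t‖ = dist (g.toContinuousMap t) (P t) := by rw [dist_eq_norm]; rfl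
        _ ≤ dist g.toContinuousMap P := ContinuousMap.dist_apply_le_dist t
        _ ≤ δ := hPdist.le
    simpa [integral_const, hC, smul_eq_mul, mul_comm, Measure.real] using this
  have hδC : δ * C ≤ ε / 4 := by
    rw [hδ, div_mul_eq_mul_div, div_le_div_iff₀ (by positivity) (by norm_num)]
    nlinarith
  calc ‖∫ t, fourier n t * F t ∂ν‖
      ≤ ‖∫ t, fourier n t * (F t - P t) ∂ν‖ + ‖∫ t, fourier n t * P t ∂ν‖ := by
        rw [hsplit]; exact norm_add_le _ _
    _ < ((∫ t, ‖F t - g t‖ ∂ν) + ∫ t, ‖g t - P t‖ ∂ν) + ε/4 := by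
        have := h1.trans h2
        linarith
    _ ≤ (ε/4 + δ * C) + ε/4 := by linarith
    _ < ε := by linarith
end

section
/- Let K be a compact Hausdorff abelian topological group with normalized Haar probability measure λ_K, let μ be a finite positive Borel measure on K, and let S : K × K → K × K be the homeomorphism S(ψ, χ) = (χ, χψ). Then: (1) for all continuous characters a, b : K → S¹, ∫_{K×K} a(x) b(y) d(S_*(μ ⊗ λ_K))(x, y) equals ∫_K b(ψ) dμ(ψ) if the character a·b is trivial, and equals 0 otherwise; (2) S_*(μ ⊗ λ_K)(Δ(K)) = μ({1}), where Δ(K) = {(x,x) : x ∈ K} is the diagonal and 1 is the identity element of K. In particular, if μ({1}) = 0 then S_*(μ ⊗ λ_K) gives the diagonal measure zero. -/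
open MeasureTheory

/-- Orthogonality: the integral of a nontrivial multiplicative function against a
left-invariant measure with total mass is zero. -/
lemma char_integral_eq_zero
    {K : Type*} [CommGroup K] [TopologicalSpace K] [IsTopologicalGroup K]
    [MeasurableSpace K] [BorelSpace K]
    (lamK : Measure K) [lamK.IsMulLeftInvariant]
    (f : K → ℂ) (hmul : ∀ x y : K, f (x * y) = f x * f y)
    (g : K) (hg : f g ≠ 1) :
    ∫ x, f x ∂lamK = 0 := by
  have h := MeasureTheory.integral_mul_left_eq_self (μ := lamK) f g
  simp_rw [hmul, integral_const_mul] at h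
  have : (f g - 1) * ∫ x, f x ∂lamK = 0 := by ring_nf; linear_combination h
  rcases mul_eq_zero.1 this with h' | h'
  · exact absurd (sub_eq_zero.1 h') hg
  · exact h'

/-- Let `K` be a compact Hausdorff abelian group with normalized Haar probability measure
`λ_K`, `μ` a finite positive Borel measure on `K`, and `S(ψ,χ) = (χ, χψ)`. Then
(1) for continuous characters `a, b` of `K`, `∫ a(x)b(y) d(S_*(μ ⊗ λ_K))` equals `∫ b dμ`
if `a·b` is trivial and `0` otherwise; and (2) `S_*(μ ⊗ λ_K)` gives the diagonal mass
`μ({1})`; in particular the diagonal is null when `μ({1}) = 0`. -/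
theorem pushforward_product_haar_characters_and_diagonal
    (K : Type*) [CommGroup K] [TopologicalSpace K] [IsTopologicalGroup K]
    [CompactSpace K] [T2Space K] [SecondCountableTopology K]
    [MeasurableSpace K] [BorelSpace K]
    (lamK : Measure K) [lamK.IsHaarMeasure] [IsProbabilityMeasure lamK]
    (μ : Measure K) [IsFiniteMeasure μ] :
    (∀ a b : ContinuousMonoidHom K Circle, (∀ x : K, a x * b x = 1) →
      ∫ p : K × K, ((a p.1 : ℂ) * (b p.2 : ℂ))
          ∂(Measure.map (fun p : K × K => (p.2, p.2 * p.1)) (μ.prod lamK))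
        = ∫ ψ, (b ψ : ℂ) ∂μ) ∧
    (∀ a b : ContinuousMonoidHom K Circle, ¬ (∀ x : K, a x * b x = 1) →
      ∫ p : K × K, ((a p.1 : ℂ) * (b p.2 : ℂ))
          ∂(Measure.map (fun p : K × K => (p.2, p.2 * p.1)) (μ.prod lamK))
        = 0) ∧
    (Measure.map (fun p : K × K => (p.2, p.2 * p.1)) (μ.prod lamK))
        {p : K × K | p.1 = p.2} = μ {1} := by
  have hScont : Continuous (fun p : K × K => (p.2, p.2 * p.1)) :=
    (continuous_snd).prodMk (continuous_snd.mul continuous_fst)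
  have hSmeas : Measurable (fun p : K × K => (p.2, p.2 * p.1)) := hScont.measurable
  -- a general computation of the integral for any characters a b
  have key : ∀ a b : ContinuousMonoidHom K Circle,
      ∫ p : K × K, ((a p.1 : ℂ) * (b p.2 : ℂ))
          ∂(Measure.map (fun p : K × K => (p.2, p.2 * p.1)) (μ.prod lamK))
        = ∫ ψ, ((b ψ : ℂ) * ∫ χ, ((a χ : ℂ) * (b χ : ℂ)) ∂lamK) ∂μ := by
    intro a b
    have hcont : Continuous (fun p : K × K => ((a p.1 : ℂ) * (b p.2 : ℂ))) :=
      (continuous_subtype_val.comp (a.continuous.comp continuous_fst)).mul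
        (continuous_subtype_val.comp (b.continuous.comp continuous_snd))
    rw [integral_map hSmeas.aemeasurable hcont.aestronglyMeasurable]
    have hcont2 : Continuous (fun p : K × K => ((a p.2 : ℂ) * (b (p.2 * p.1) : ℂ))) :=
      hcont.comp hScont
    have hint : Integrable (fun p : K × K => ((a p.2 : ℂ) * (b (p.2 * p.1) : ℂ)))
        (μ.prod lamK) :=
      hcont2.integrable_of_hasCompactSupport (HasCompactSupport.of_compactSpace _)
    calc ∫ p : K × K, ((a p.2 : ℂ) * (b (p.2 * p.1) : ℂ)) ∂(μ.prod lamK)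
        = ∫ ψ, ∫ χ, ((a χ : ℂ) * (b (χ * ψ) : ℂ)) ∂lamK ∂μ := integral_prod _ hint
      _ = ∫ ψ, ((b ψ : ℂ) * ∫ χ, ((a χ : ℂ) * (b χ : ℂ)) ∂lamK) ∂μ := by
          have heq : ∀ ψ : K, ∫ χ, ((a χ : ℂ) * (b (χ * ψ) : ℂ)) ∂lamK
              = (b ψ : ℂ) * ∫ χ, ((a χ : ℂ) * (b χ : ℂ)) ∂lamK := by
            intro ψ
            rw [← integral_const_mul]
            congr 1
            funext χ
            rw [map_mul, Circle.coe_mul]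
            ring
          simp_rw [heq]
  refine ⟨fun a b hab => ?_, fun a b hab => ?_, ?_⟩
  · rw [key a b]
    have : ∀ χ : K, (a χ : ℂ) * (b χ : ℂ) = 1 := by
      intro χ
      rw [← Circle.coe_mul, hab χ, Circle.coe_one]
    simp only [this, integral_const, measure_univ, probReal_univ, ENNReal.toReal_one, one_smul, smul_eq_mul,
      mul_one]
  · rw [key a b]
    push_neg at hab
    obtain ⟨g, hg⟩ := hab
    have hzero : ∫ χ, ((a χ : ℂ) * (b χ : ℂ)) ∂lamK = 0 := by
      refine char_integral_eq_zero lamK _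
        (fun x y => by rw [map_mul, map_mul, Circle.coe_mul, Circle.coe_mul]; ring) g ?_
      intro h
      rw [← Circle.coe_mul, Circle.coe_eq_one] at h
      exact hg h
    simp [hzero]
  · have hdiag : MeasurableSet {p : K × K | p.1 = p.2} :=
      (isClosed_eq continuous_fst continuous_snd).measurableSet
    rw [Measure.map_apply hSmeas hdiag]
    have hset : (fun p : K × K => (p.2, p.2 * p.1)) ⁻¹' {p : K × K | p.1 = p.2}
        = ({1} : Set K) ×ˢ (Set.univ : Set K) := by
      ext ⟨ψ, χ⟩
      simp only [Set.mem_preimage, Set.mem_setOf_eq, Set.mem_prod, Set.mem_singleton_iff,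
        Set.mem_univ, and_true]
      constructor
      · intro h
        exact (mul_left_cancel (by rw [mul_one]; exact h : χ * 1 = χ * ψ)).symm
      · intro h; simp [h]
    rw [hset, Measure.prod_prod, measure_univ, mul_one]
end
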